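/- arXiv:1110.6728 — 3 statements merged into one kernel-verified Lean document; each statement's English description precedes it below -/
import Mathlib

section
/- Let ℓ ≥ 1 be an integer, S > 0 a real number, and let a : ℤ → ℝ be an (ℓ, S)-ladder ordering, i.e. a(j+1) < a(j) for all j ∈ ℤ and a(j+ℓ) = a(j) − S for all j ∈ ℤ. Then for all integers j ≤ j', one has |(j' − j) − ℓ·(a(j) − a(j'))/S| ≤ ℓ. -/
/-- Counting lemma for ladder orderings: if `a : ℤ → ℝ` is strictly decreasing and
satisfies `a (j + ℓ) = a j - S` for all `j` (an `(ℓ, S)`-ladder ordering), then for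
all `j ≤ j'` the difference `j' - j` agrees with `ℓ·(a j - a j')/S` up to `ℓ`. -/
theorem stmt_4 (ℓ : ℤ) (hℓ : 1 ≤ ℓ) (S : ℝ) (hS : 0 < S) (a : ℤ → ℝ)
    (hdec : ∀ j : ℤ, a (j + 1) < a j)
    (hper : ∀ j : ℤ, a (j + ℓ) = a j - S) :
    ∀ j j' : ℤ, j ≤ j' →
      |((j' - j : ℤ) : ℝ) - (ℓ : ℝ) * (a j - a j') / S| ≤ (ℓ : ℝ) := by
  have haux : ∀ n : ℕ, ∀ k : ℤ, a (k + n * ℓ) = a k - n * S := by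
    intro n
    induction n with
    | zero => simp
    | succ m ih =>
      intro k
      have h : (k : ℤ) + ((m : ℤ) + 1) * ℓ = (k + m * ℓ) + ℓ := by ring
      push_cast
      rw [h, hper, ih]
      push_cast
      ring
  have hanti : StrictAnti a := strictAnti_int_of_succ_lt hdec
  intro j j' hjj
  have hℓ0 : (0:ℤ) < ℓ := by omega
  set d := j' - j with hd
  have hd0 : 0 ≤ d := by omega
  set q := d / ℓ with hq
  set r := d % ℓ with hr
  have hr0 : 0 ≤ r := Int.emod_nonneg d (by omega)
  have hrℓ : r < ℓ := Int.emod_lt_of_pos d hℓ0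
  have hq0 : 0 ≤ q := Int.ediv_nonneg hd0 (by omega)
  have hdq : d = ℓ * q + r := (Int.mul_ediv_add_emod d ℓ).symm
  have htq : ((q.toNat : ℕ) : ℤ) = q := Int.toNat_of_nonneg hq0
  have hj' : j' = (j + r) + q.toNat * ℓ := by
    rw [htq, mul_comm]; linarith
  have ha' : a j' = a (j + r) - q.toNat * S := by rw [hj', haux]
  have h1 : a (j + r) ≤ a j := hanti.antitone (by omega)
  have h2 : a j - S ≤ a (j + r) := by
    rw [← hper j]; exact hanti.antitone (by omega)
  have hqQ' : ((q.toNat : ℕ) : ℝ) = ((q : ℤ) : ℝ) := by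
    exact_mod_cast congrArg (fun z : ℤ => (z : ℝ)) (Int.toNat_of_nonneg hq0)
  have hℓR : (0:ℝ) < (ℓ:ℝ) := by exact_mod_cast hℓ0
  have key : ((j' - j : ℤ) : ℝ) - (ℓ : ℝ) * (a j - a j') / S
      = (r : ℝ) - (ℓ : ℝ) * (a j - a (j + r)) / S := by
    have hdR : ((j' - j : ℤ) : ℝ) = (ℓ:ℝ) * (q:ℝ) + (r:ℝ) := by
      rw [← hd]; exact_mod_cast congrArg (fun z : ℤ => (z : ℝ)) hdq
    rw [hdR, ha', hqQ']
    field_simp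
    ring
  rw [key]
  have hx0 : 0 ≤ a j - a (j + r) := by linarith
  have hxS : a j - a (j + r) ≤ S := by linarith
  have hdiv0 : 0 ≤ (ℓ : ℝ) * (a j - a (j + r)) / S :=
    div_nonneg (by positivity) hS.le
  have hdivℓ : (ℓ : ℝ) * (a j - a (j + r)) / S ≤ (ℓ:ℝ) := by
    rw [div_le_iff₀ hS]
    nlinarith
  have hrR : (0:ℝ) ≤ (r:ℝ) := by exact_mod_cast hr0
  have hrRℓ : (r:ℝ) < (ℓ:ℝ) := by exact_mod_cast hrℓ
  rw [abs_le]
  constructor <;> linarith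
end

section
/- Let ℓ ≥ 1 be an integer and S > 0, T > 0 real numbers. Let a : ℤ → ℝ be an (ℓ, S)-ladder ordering and b : ℤ → ℝ an (ℓ, T)-ladder ordering, i.e. both are strictly decreasing and satisfy a(j+ℓ) = a(j) − S and b(j+ℓ) = b(j) − T for all j ∈ ℤ. Then for all integers j, j': |(a(j) − a(j'))/S − (b(j) − b(j'))/T| ≤ 2. -/
lemma ladder_bound (ℓ : ℤ) (hℓ : 1 ≤ ℓ) (S : ℝ) (hS : 0 < S) (a : ℤ → ℝ)
    (hdec : ∀ j : ℤ, a (j + 1) < a j)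
    (hper : ∀ j : ℤ, a (j + ℓ) = a j - S) (j j' : ℤ) :
    (((j' - j) / ℓ : ℤ) : ℝ) ≤ (a j - a j') / S ∧
      (a j - a j') / S < (((j' - j) / ℓ : ℤ) : ℝ) + 1 := by
  have anti : StrictAnti a := strictAnti_int_of_succ_lt hdec
  have key : ∀ k : ℤ, a (j + k * ℓ) = a j - k * S := by
    intro k
    induction k using Int.induction_on with
    | zero => simp
    | succ n ih =>
        have := hper (j + n * ℓ)
        have harg : j + n * ℓ + ℓ = j + (n + 1 : ℤ) * ℓ := by ring
        rw [harg] at this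
        rw [this, ih]; push_cast; ring
    | pred n ih =>
        have := hper (j + (-n - 1) * ℓ)
        have harg : j + (-n - 1 : ℤ) * ℓ + ℓ = j + (-n : ℤ) * ℓ := by ring
        rw [harg, ih] at this
        push_cast at this ⊢
        linarith
  obtain ⟨q, hq⟩ : ∃ q : ℤ, q = (j' - j) / ℓ := ⟨_, rfl⟩
  rw [← hq]
  have hdm : ℓ * q + (j' - j) % ℓ = j' - j := by
    rw [hq]; exact Int.mul_ediv_add_emod (j' - j) ℓ
  have hr0 : 0 ≤ (j' - j) % ℓ := Int.emod_nonneg _ (by omega)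
  have hrl : (j' - j) % ℓ < ℓ := Int.emod_lt_of_pos _ (by omega)
  have hqc : q * ℓ = ℓ * q := mul_comm _ _
  have h1 : j + q * ℓ ≤ j' := by omega
  have h2 : j' < j + (q + 1) * ℓ := by
    have : (q + 1) * ℓ = q * ℓ + ℓ := by ring
    omega
  have hb1 : a j' ≤ a (j + q * ℓ) := anti.antitone h1
  have hb2 : a (j + (q + 1) * ℓ) < a j' := anti h2
  rw [key q] at hb1
  rw [key (q + 1)] at hb2
  push_cast at hb2
  constructor
  · rw [le_div_iff₀ hS]; linarith
  · rw [div_lt_iff₀ hS]; linarith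

/-- If `a` is an `(ℓ, S)`-ladder ordering and `b` is an `(ℓ, T)`-ladder ordering
(both strictly decreasing, with `a (j+ℓ) = a j - S` and `b (j+ℓ) = b j - T`), then
for all integers `j, j'` the normalized differences agree up to `2`. -/
theorem stmt_6 (ℓ : ℤ) (hℓ : 1 ≤ ℓ) (S T : ℝ) (hS : 0 < S) (hT : 0 < T)
    (a b : ℤ → ℝ)
    (hadec : ∀ j : ℤ, a (j + 1) < a j)
    (haper : ∀ j : ℤ, a (j + ℓ) = a j - S)
    (hbdec : ∀ j : ℤ, b (j + 1) < b j)
    (hbper : ∀ j : ℤ, b (j + ℓ) = b j - T) :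
    ∀ j j' : ℤ, |(a j - a j') / S - (b j - b j') / T| ≤ 2 := by
  intro j j'
  obtain ⟨ha1, ha2⟩ := ladder_bound ℓ hℓ S hS a hadec haper j j'
  obtain ⟨hb1, hb2⟩ := ladder_bound ℓ hℓ T hT b hbdec hbper j j'
  rw [abs_le]
  constructor <;> linarith
end

section
/- Let ℓ ≥ 1 be an integer, S > 0 and T > 0 real numbers, x_A, y_A, x_D, y_D real numbers, and C ≥ 0. Suppose (k_i)_{i∈ℕ} is an unbounded sequence of positive integers and that for each i there exist functions a_i, b_i : ℤ → ℝ, each strictly decreasing and satisfying a_i(j+ℓ) = a_i(j) − S and b_i(j+ℓ) = b_i(j) − T for all j ∈ ℤ, together with integers j_i, j'_i such that |a_i(j_i) − k_i·x_A| ≤ C, |a_i(j'_i) − k_i·y_A| ≤ C, |b_i(j_i) − k_i·x_D| ≤ C, and |b_i(j'_i) − k_i·y_D| ≤ C. Then (x_A − y_A)/S = (x_D − y_D)/T. -/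
private lemma ladder_shift (ℓ : ℤ) (S : ℝ) (a : ℤ → ℝ)
    (hper : ∀ m : ℤ, a (m + ℓ) = a m - S) :
    ∀ q : ℤ, ∀ m : ℤ, a (m + q * ℓ) = a m - q * S := by
  intro q
  induction q using Int.induction_on with
  | zero => simp
  | succ n ih =>
      intro m
      have : m + (n + 1 : ℤ) * ℓ = (m + n * ℓ) + ℓ := by ring
      rw [this, hper, ih]
      push_cast; ring
  | pred n ih =>
      intro m
      have h1 := hper (m + (-n - 1 : ℤ) * ℓ)
      have : m + (-n - 1 : ℤ) * ℓ + ℓ = m + (-(n : ℤ)) * ℓ := by ring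
      rw [this, ih] at h1
      push_cast at h1 ⊢
      linarith

private lemma ladder_key (ℓ : ℤ) (hℓ : 1 ≤ ℓ) (S : ℝ) (a : ℤ → ℝ)
    (hsa : ∀ m : ℤ, a (m + 1) < a m) (hper : ∀ m : ℤ, a (m + ℓ) = a m - S)
    (j j' : ℤ) :
    0 ≤ a j - a j' - ((j' - j) / ℓ : ℤ) * S ∧
      a j - a j' - ((j' - j) / ℓ : ℤ) * S ≤ S := by
  have hanti : StrictAnti a := strictAnti_int_of_succ_lt hsa
  have hℓ0 : (0 : ℤ) < ℓ := by omega
  set q : ℤ := (j' - j) / ℓ with hq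
  set r : ℤ := (j' - j) % ℓ with hr
  have hr0 : 0 ≤ r := Int.emod_nonneg _ (by omega)
  have hr1 : r < ℓ := Int.emod_lt_of_pos _ hℓ0
  have hdecomp : j' = j + r + q * ℓ := by
    have h0 := Int.mul_ediv_add_emod (j' - j) ℓ
    have h1 : q * ℓ = ℓ * ((j' - j) / ℓ) := by rw [hq, mul_comm]
    omega
  have hshift := ladder_shift ℓ S a hper q (j + r)
  have haj' : a j' = a (j + r) - q * S := by rw [hdecomp]; exact hshift
  have h1 : a (j + r) ≤ a j := hanti.antitone (by omega)
  have h2 : a (j + ℓ) ≤ a (j + r) := hanti.antitone (by omega)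
  have h3 : a (j + ℓ) = a j - S := hper j
  constructor <;> [nlinarith [h1, haj']; nlinarith [h2, h3, haj']]

/-- Core abstraction of the action–index relations: if along an unbounded sequence
`k i` of positive integers there are `(ℓ, S)`-ladder orderings `a_i` and
`(ℓ, T)`-ladder orderings `b_i` together with positions `j_i, j'_i` at which `a_i`
approximates `k_i·x_A`, `k_i·y_A` and `b_i` approximates `k_i·x_D`, `k_i·y_D` up to
a uniform constant `C`, then `(x_A - y_A)/S = (x_D - y_D)/T`. -/
theorem stmt_8 (ℓ : ℤ) (hℓ : 1 ≤ ℓ) (S T : ℝ) (hS : 0 < S) (hT : 0 < T)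
    (xA yA xD yD C : ℝ) (hC : 0 ≤ C)
    (k : ℕ → ℕ) (hkpos : ∀ i, 0 < k i) (hkunb : ∀ n : ℕ, ∃ i, n < k i)
    (h : ∀ i : ℕ, ∃ (a b : ℤ → ℝ) (j j' : ℤ),
      (∀ m : ℤ, a (m + 1) < a m) ∧ (∀ m : ℤ, a (m + ℓ) = a m - S) ∧
      (∀ m : ℤ, b (m + 1) < b m) ∧ (∀ m : ℤ, b (m + ℓ) = b m - T) ∧
      |a j - (k i : ℝ) * xA| ≤ C ∧ |a j' - (k i : ℝ) * yA| ≤ C ∧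
      |b j - (k i : ℝ) * xD| ≤ C ∧ |b j' - (k i : ℝ) * yD| ≤ C) :
    (xA - yA) / S = (xD - yD) / T := by
  set D : ℝ := (xA - yA) / S - (xD - yD) / T with hD
  set M : ℝ := (2 * C + S) / S + (2 * C + T) / T with hM
  have hM0 : 0 ≤ M := by
    have : 0 ≤ (2 * C + S) / S := div_nonneg (by linarith) hS.le
    have : 0 ≤ (2 * C + T) / T := div_nonneg (by linarith) hT.le
    rw [hM]; positivity
  -- main estimate: for every i, |k i * D| ≤ M
  have hmain : ∀ i : ℕ, |(k i : ℝ) * D| ≤ M := by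
    intro i
    obtain ⟨a, b, j, j', hsa, hpa, hsb, hpb, hA1, hA2, hB1, hB2⟩ := h i
    obtain ⟨ha0, ha1⟩ := ladder_key ℓ hℓ S a hsa hpa j j'
    obtain ⟨hb0, hb1⟩ := ladder_key ℓ hℓ T b hsb hpb j j'
    set q : ℤ := (j' - j) / ℓ with hq
    have hA : |(k i : ℝ) * (xA - yA) - q * S| ≤ 2 * C + S := by
      rw [abs_le] at hA1 hA2 ⊢
      constructor <;> nlinarith [hA1.1, hA1.2, hA2.1, hA2.2]
    have hB : |(k i : ℝ) * (xD - yD) - q * T| ≤ 2 * C + T := by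
      rw [abs_le] at hB1 hB2 ⊢
      constructor <;> nlinarith [hB1.1, hB1.2, hB2.1, hB2.2]
    have key : (k i : ℝ) * D =
        ((k i : ℝ) * (xA - yA) - q * S) / S - ((k i : ℝ) * (xD - yD) - q * T) / T := by
      rw [hD]; field_simp
      ring
    rw [key]
    calc |((k i : ℝ) * (xA - yA) - q * S) / S - ((k i : ℝ) * (xD - yD) - q * T) / T|
        ≤ |((k i : ℝ) * (xA - yA) - q * S) / S| + |((k i : ℝ) * (xD - yD) - q * T) / T| :=
          abs_sub _ _
      _ ≤ M := by
          rw [hM, abs_div, abs_div, abs_of_pos hS, abs_of_pos hT]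
          gcongr
  -- conclude D = 0
  have hD0 : D = 0 := by
    by_contra hne
    have hDpos : 0 < |D| := abs_pos.mpr hne
    obtain ⟨i, hi⟩ := hkunb ⌈M / |D|⌉₊
    have h1 : M / |D| ≤ (⌈M / |D|⌉₊ : ℝ) := Nat.le_ceil _
    have h2 : (⌈M / |D|⌉₊ : ℝ) < (k i : ℝ) := by exact_mod_cast hi
    have h3 : M < (k i : ℝ) * |D| := by
      have := (div_lt_iff₀ hDpos).mp (lt_of_le_of_lt h1 h2)
      linarith
    have h4 : |(k i : ℝ) * D| = (k i : ℝ) * |D| := by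
      rw [abs_mul, abs_of_nonneg (by positivity : (0:ℝ) ≤ (k i : ℝ))]
    have := hmain i
    rw [h4] at this
    linarith
  have : (xA - yA) / S = (xD - yD) / T := by
    have := hD0
    rw [hD] at this
    linarith
  exact this
end
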